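/- (Theorem 1, net consumption zone) Let τ_t ∈ [0, (T−t−1)·v̄] satisfy −π_t⁺ ∈ h_{t+1}(τ_t). Then the decision d*_i = l_i(π_t⁺) for every i together with v* = min{v̄, max{y_t − τ_t, 0}} is an optimal solution of the Bellman equation at time t whenever v* + Σ_i d*_i > r_t; equivalently, (v*, d*) solves the convex program P⁺: maximize Σ_i U_i(d_i) − π_t⁺(v + Σ_i d_i − r_t) + V̄_{t+1}(y_t − v) subject to v + Σ_i d_i ≥ r_t, d ∈ D, v ∈ [0, min{v̄, y_t}], with the net-consumption constraint inactive. -/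

import Mathlib

open MeasureTheory Set

/-- NEM X payment for net consumption `z` with buy price `pp` and sell price `pm`. -/
noncomputable def NEMPayment (pp pm z : ℝ) : ℝ := pp * max z 0 - pm * max (-z) 0

/-- The superdifferential of a function `f : ℝ → ℝ` (viewed as a concave function
on `[0, ∞)`) at a point `y`. -/
def superdiff (f : ℝ → ℝ) (y : ℝ) : Set ℝ :=
  {s | ∀ z, 0 ≤ z → f z ≤ f y + s * (z - y)}

/-- Data of the EV-charging / flexible-consumption dynamic program over horizon
`{0, …, T-1}` with `K` flexible loads, under NEM time-of-use prices. -/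
structure EVModel (K T : ℕ) (Ω : Type) [MeasurableSpace Ω] where
  /-- underlying probability measure -/
  μ : Measure Ω
  prob : IsProbabilityMeasure μ
  /-- consumption upper bounds -/
  dbar : Fin K → ℝ
  dbar_pos : ∀ i, 0 < dbar i
  /-- device utility functions -/
  U : Fin K → ℝ → ℝ
  U_strictConcave : ∀ i, StrictConcaveOn ℝ (Icc 0 (dbar i)) (U i)
  U_strictMono : ∀ i, StrictMonoOn (U i) (Icc 0 (dbar i))
  U_diff : ∀ i, ∀ x ∈ Icc 0 (dbar i), DifferentiableWithinAt ℝ (U i) (Icc 0 (dbar i)) x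
  U_contDeriv : ∀ i, ContinuousOn (fun x => derivWithin (U i) (Icc 0 (dbar i)) x) (Icc 0 (dbar i))
  U_zero : ∀ i, U i 0 = 0
  /-- renewable processes -/
  r : ℕ → Ω → ℝ
  r_meas : ∀ t, Measurable (r t)
  r_nonneg : ∀ t ω, 0 ≤ r t ω
  r_int : ∀ t, Integrable (r t) μ
  r_indep : ProbabilityTheory.iIndepFun r μ
  /-- time-of-use buy prices `π_t⁺` -/
  pip : ℕ → ℝ
  /-- time-of-use sell prices `π_t⁻` -/
  pim : ℕ → ℝ
  /-- maximal per-period EV charge -/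
  vbar : ℝ
  vbar_pos : 0 < vbar
  /-- per-unit penalty for unmet EV demand at the horizon -/
  γ : ℝ
  /-- `π_off⁻ = min_t π_t⁻` -/
  pioff : ℝ
  pioff_le : ∀ t < T, pioff ≤ pim t
  pioff_attained : ∃ t < T, pioff = pim t
  /-- assumption A1 -/
  A1 : ∀ t < T, 0 < pim t ∧ pim t ≤ pip t ∧ pip t < γ

namespace EVModel

variable {K T : ℕ} {Ω : Type} [MeasurableSpace Ω]

/-- Stage reward `g_t(x_t, v, d)`. -/
noncomputable def stage (M : EVModel K T Ω) (t : ℕ) (rt v : ℝ) (d : Fin K → ℝ) : ℝ :=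
  ∑ i, M.U i (d i) - NEMPayment (M.pip t) (M.pim t) (v + ∑ i, d i - rt)

/-- Feasible decisions `(v, d)` given remaining demand `y`. -/
def feas (M : EVModel K T Ω) (y : ℝ) : Set (ℝ × (Fin K → ℝ)) :=
  {p | p.1 ∈ Icc 0 (min M.vbar y) ∧ ∀ i, p.2 i ∈ Icc 0 (M.dbar i)}

/-- Value function indexed by `k = T - 1 - t`, the number of remaining periods after
the current one. -/
noncomputable def W (M : EVModel K T Ω) : ℕ → ℝ → ℝ → ℝ
  | 0 => fun y rt => sSup ((fun p : ℝ × (Fin K → ℝ) =>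
      M.stage (T - 1) rt p.1 p.2 - M.γ * (y - p.1)) '' M.feas y)
  | (k + 1) => fun y rt => sSup ((fun p : ℝ × (Fin K → ℝ) =>
      M.stage (T - 2 - k) rt p.1 p.2 +
        ∫ ω, M.W k (y - p.1) (M.r (T - 1 - k) ω) ∂M.μ) '' M.feas y)

/-- Value function `V_t(y, r_t)` (the price argument is determined by `t`). -/
noncomputable def V (M : EVModel K T Ω) (t : ℕ) (y rt : ℝ) : ℝ := M.W (T - 1 - t) y rt

/-- Expected value function `V̄_t(y) = E[V_t(y, r_t, π_t)]`. -/
noncomputable def Vbar (M : EVModel K T Ω) (t : ℕ) (y : ℝ) : ℝ := ∫ ω, M.V t y (M.r t ω) ∂M.μ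

/-- Objective of the Bellman equation at time `t` in state `(y, rt)`. -/
noncomputable def bellObj (M : EVModel K T Ω) (t : ℕ) (y rt : ℝ) (p : ℝ × (Fin K → ℝ)) : ℝ :=
  if t = T - 1 then M.stage t rt p.1 p.2 - M.γ * (y - p.1)
  else M.stage t rt p.1 p.2 + ∫ ω, M.V (t + 1) (y - p.1) (M.r (t + 1) ω) ∂M.μ

/-- `(v, d)` is an optimal solution of the Bellman equation at time `t`. -/
def IsBellmanOpt (M : EVModel K T Ω) (t : ℕ) (y rt : ℝ) (p : ℝ × (Fin K → ℝ)) : Prop :=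
  p ∈ M.feas y ∧ ∀ q ∈ M.feas y, M.bellObj t y rt q ≤ M.bellObj t y rt p

/-- Superdifferential `h_t` of the concave expected value function `V̄_t`. -/
noncomputable def h (M : EVModel K T Ω) (t : ℕ) (y : ℝ) : Set ℝ := superdiff (M.Vbar t) y

end EVModel

section Generic

lemma tangent_of_concaveOn {S : Set ℝ} {f : ℝ → ℝ} {f' a : ℝ}
    (hfc : ConcaveOn ℝ S f) (ha : a ∈ S) (hf' : HasDerivWithinAt f f' S a)
    {x : ℝ} (hx : x ∈ S) : f x ≤ f a + f' * (x - a) := by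
  rcases lt_trichotomy x a with h | h | h
  · have h1 := hfc.le_slope_of_hasDerivWithinAt hx ha h hf'
    rw [slope_def_field, le_div_iff₀ (by linarith)] at h1
    linarith
  · subst h; simp
  · have h1 := hfc.slope_le_of_hasDerivWithinAt ha hx h hf'
    rw [slope_def_field, div_le_iff₀ (by linarith)] at h1
    linarith

lemma NEM_eq_max {pp pm : ℝ} (h : pm ≤ pp) (z : ℝ) :
    NEMPayment pp pm z = max (pp * z) (pm * z) := by
  unfold NEMPayment
  rcases le_total z 0 with hz | hz
  · rw [max_eq_right hz, max_eq_left (by linarith), max_eq_right (by nlinarith)]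
    ring
  · rw [max_eq_left hz, max_eq_right (by linarith), max_eq_left (by nlinarith)]
    ring

lemma NEM_comb {pp pm : ℝ} (h : pm ≤ pp) {a b : ℝ} (z1 z2 : ℝ)
    (ha : 0 ≤ a) (hb : 0 ≤ b) :
    NEMPayment pp pm (a * z1 + b * z2) ≤ a * NEMPayment pp pm z1 + b * NEMPayment pp pm z2 := by
  rw [NEM_eq_max h, NEM_eq_max h, NEM_eq_max h]
  apply max_le
  · have h1 : pp * z1 ≤ max (pp * z1) (pm * z1) := le_max_left _ _
    have h2 : pp * z2 ≤ max (pp * z2) (pm * z2) := le_max_left _ _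
    nlinarith
  · have h1 : pm * z1 ≤ max (pp * z1) (pm * z1) := le_max_right _ _
    have h2 : pm * z2 ≤ max (pp * z2) (pm * z2) := le_max_right _ _
    nlinarith

lemma NEM_ge_pp {pp pm : ℝ} (h : pm ≤ pp) (z : ℝ) : pp * z ≤ NEMPayment pp pm z := by
  rw [NEM_eq_max h]; exact le_max_left _ _

lemma NEM_ge_pm {pp pm : ℝ} (h : pm ≤ pp) (z : ℝ) : pm * z ≤ NEMPayment pp pm z := by
  rw [NEM_eq_max h]; exact le_max_right _ _

lemma NEM_of_nonneg {pp pm : ℝ} (h : pm ≤ pp) {z : ℝ} (hz : 0 ≤ z) :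
    NEMPayment pp pm z = pp * z := by
  rw [NEM_eq_max h, max_eq_left (by nlinarith)]

lemma NEM_abs_sub {pp pm g : ℝ} (h : pm ≤ pp) (hpm : 0 ≤ pm) (hppg : pp ≤ g) (hpmg : pm ≤ g)
    (z1 z2 : ℝ) : |NEMPayment pp pm z1 - NEMPayment pp pm z2| ≤ g * |z1 - z2| := by
  rw [NEM_eq_max h, NEM_eq_max h]
  refine le_trans (abs_max_sub_max_le_max _ _ _ _) (max_le ?_ ?_)
  · rw [← mul_sub, abs_mul, abs_of_nonneg (by linarith)]
    have := abs_nonneg (z1 - z2); nlinarith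
  · rw [← mul_sub, abs_mul, abs_of_nonneg hpm]
    have := abs_nonneg (z1 - z2); nlinarith

lemma mul_csSup_le {S : Set ℝ} (hne : S.Nonempty) {a C : ℝ} (ha : 0 ≤ a)
    (h : ∀ x ∈ S, a * x ≤ C) : a * sSup S ≤ C := by
  rcases ha.eq_or_lt with rfl | ha'
  · obtain ⟨x, hx⟩ := hne
    simpa using h x hx
  · rw [← le_div_iff₀' ha']
    exact csSup_le hne fun x hx => (le_div_iff₀' ha').2 (h x hx)

lemma abs_csSup_sub_csSup_le {α : Type*} {s : Set α} (hs : s.Nonempty) {f g : α → ℝ} {ε : ℝ}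
    (hbf : BddAbove (f '' s)) (hbg : BddAbove (g '' s))
    (h : ∀ p ∈ s, |f p - g p| ≤ ε) :
    |sSup (f '' s) - sSup (g '' s)| ≤ ε := by
  rw [abs_sub_le_iff]
  constructor
  · rw [sub_le_iff_le_add]
    refine csSup_le (hs.image f) ?_
    rintro _ ⟨p, hp, rfl⟩
    have := (abs_sub_le_iff.1 (h p hp)).1
    have h2 : g p ≤ sSup (g '' s) := le_csSup hbg ⟨p, hp, rfl⟩
    linarith
  · rw [sub_le_iff_le_add]
    refine csSup_le (hs.image g) ?_
    rintro _ ⟨p, hp, rfl⟩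
    have := (abs_sub_le_iff.1 (h p hp)).2
    have h2 : f p ≤ sSup (f '' s) := le_csSup hbf ⟨p, hp, rfl⟩
    linarith

end Generic

section VD

variable {f : ℝ → ℝ} {π τ : ℝ}

/-- concavity in combination form -/
def CombConc (f : ℝ → ℝ) : Prop :=
  ∀ y1 y2 a b : ℝ, 0 ≤ y1 → 0 ≤ y2 → 0 ≤ a → 0 ≤ b → a + b = 1 →
    a * f y1 + b * f y2 ≤ f (a * y1 + b * y2)

lemma slope_left (hconc : CombConc f) (hτ0 : 0 ≤ τ)
    (hsd : ∀ z, 0 ≤ z → f z ≤ f τ + (-π) * (z - τ)) :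
    ∀ a b : ℝ, 0 ≤ a → a ≤ b → b ≤ τ → -(π * (b - a)) ≤ f b - f a := by
  intro a b ha hab hbτ
  rcases eq_or_lt_of_le hab with rfl | hab
  · simp
  rcases eq_or_lt_of_le hbτ with rfl | hbτ
  · have := hsd a ha; linarith
  have hτa : 0 < τ - a := by linarith
  set lam := (τ - b) / (τ - a) with hlam
  set mu := (b - a) / (τ - a) with hmu
  have hlam0 : 0 ≤ lam := div_nonneg (by linarith) hτa.le
  have hmu0 : 0 ≤ mu := div_nonneg (by linarith) hτa.le
  have hsum : lam + mu = 1 := by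
    rw [hlam, hmu, ← add_div]
    field_simp
    ring
  have hcomb : lam * a + mu * τ = b := by
    rw [hlam, hmu]; field_simp; ring
  have h1 := hconc a τ lam mu ha hτ0 hlam0 hmu0 hsum
  rw [hcomb] at h1
  have h2 := hsd a ha
  have h3 : mu * (τ - a) = b - a := by rw [hmu]; field_simp
  have key : mu * f a ≤ mu * f τ + π * (b - a) := by
    have h4 := mul_le_mul_of_nonneg_left h2 hmu0
    have h5 : mu * (f τ + -π * (a - τ)) = mu * f τ + π * (mu * (τ - a)) := by ring
    rw [h5, h3] at h4
    exact h4
  have hlam' : lam = 1 - mu := by linarith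
  have e : lam * f a + mu * f τ = f a - (mu * f a - mu * f τ) := by rw [hlam']; ring
  rw [e] at h1
  linarith

lemma slope_right (hconc : CombConc f) (hτ0 : 0 ≤ τ)
    (hsd : ∀ z, 0 ≤ z → f z ≤ f τ + (-π) * (z - τ)) :
    ∀ a b : ℝ, τ ≤ a → a ≤ b → f b - f a ≤ -(π * (b - a)) := by
  intro a b hτa hab
  rcases eq_or_lt_of_le hab with rfl | hab
  · simp
  rcases eq_or_lt_of_le hτa with rfl | hτa
  · have := hsd b (by linarith); linarith
  have hb0 : 0 ≤ b := by linarith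
  have hbτ : 0 < b - τ := by linarith
  set lam := (b - a) / (b - τ) with hlam
  set mu := (a - τ) / (b - τ) with hmu
  have hlam0 : 0 ≤ lam := div_nonneg (by linarith) hbτ.le
  have hmu0 : 0 ≤ mu := div_nonneg (by linarith) hbτ.le
  have hsum : lam + mu = 1 := by
    rw [hlam, hmu, ← add_div]
    field_simp
    ring
  have hcomb : lam * τ + mu * b = a := by
    rw [hlam, hmu]; field_simp; ring
  have h1 := hconc τ b lam mu hτ0 hb0 hlam0 hmu0 hsum
  rw [hcomb] at h1
  have h2 := hsd b hb0
  have h3 : lam * (b - τ) = b - a := by rw [hlam]; field_simp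
  have key : lam * f b ≤ lam * f τ - π * (b - a) := by
    have h4 := mul_le_mul_of_nonneg_left h2 hlam0
    have h5 : lam * (f τ + -π * (b - τ)) = lam * f τ - π * (lam * (b - τ)) := by ring
    rw [h5, h3] at h4
    exact h4
  have hmu' : mu = 1 - lam := by linarith
  have e : lam * f τ + mu * f b = f b - (lam * f b - lam * f τ) := by rw [hmu']; ring
  rw [e] at h1
  linarith

lemma vopt (hconc : CombConc f) (hτ0 : 0 ≤ τ)
    (hsd : ∀ z, 0 ≤ z → f z ≤ f τ + (-π) * (z - τ))
    {vb y : ℝ} (hvb : 0 < vb) (hy : 0 ≤ y) :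
    ∀ v, 0 ≤ v → v ≤ min vb y →
      -(π * v) + f (y - v) ≤
        -(π * min vb (max (y - τ) 0)) + f (y - min vb (max (y - τ) 0)) := by
  intro v hv0 hvle
  have hvy : v ≤ y := hvle.trans (min_le_right _ _)
  have hvvb : v ≤ vb := hvle.trans (min_le_left _ _)
  rcases le_total y τ with hyτ | hτy
  · have hst : min vb (max (y - τ) 0) = 0 := by
      rw [max_eq_right (by linarith), min_eq_right hvb.le]
    rw [hst]
    have := slope_left hconc hτ0 hsd (y - v) y (by linarith) (by linarith) hyτ
    simp only [mul_zero, neg_zero, sub_zero, zero_add]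
    linarith
  · rcases le_total (y - τ) vb with h1 | h1
    · have hst : min vb (max (y - τ) 0) = y - τ := by
        rw [max_eq_left (by linarith), min_eq_right h1]
      rw [hst]
      have := hsd (y - v) (by linarith)
      have hyy : y - (y - τ) = τ := by ring
      rw [hyy]
      linarith
    · have hst : min vb (max (y - τ) 0) = vb := by
        rw [max_eq_left (by linarith), min_eq_left h1]
      rw [hst]
      have := slope_right hconc hτ0 hsd (y - vb) (y - v) (by linarith) (by linarith)
      linarith

end VD

section ModelAux

open Finset in
lemma fin_sum_zero {K : ℕ} : (∑ _i : Fin K, (0:ℝ)) = 0 := by simp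

namespace EVModel

variable {K T : ℕ} {Ω : Type} [MeasurableSpace Ω]

lemma gamma_pos (M : EVModel K T Ω) (hT : 0 < T) : 0 < M.γ := by
  obtain ⟨h1, h2, h3⟩ := M.A1 (T - 1) (by omega)
  linarith

lemma U_nonneg (M : EVModel K T Ω) (i : Fin K) {x : ℝ} (hx : x ∈ Icc 0 (M.dbar i)) :
    0 ≤ M.U i x := by
  have h0 : (0:ℝ) ∈ Icc 0 (M.dbar i) := ⟨le_refl _, (M.dbar_pos i).le⟩
  have := (M.U_strictMono i).monotoneOn h0 hx hx.1
  rwa [M.U_zero i] at this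

lemma U_le_top (M : EVModel K T Ω) (i : Fin K) {x : ℝ} (hx : x ∈ Icc 0 (M.dbar i)) :
    M.U i x ≤ M.U i (M.dbar i) :=
  (M.U_strictMono i).monotoneOn hx ⟨(M.dbar_pos i).le, le_refl _⟩ hx.2

lemma feas_zero_mem (M : EVModel K T Ω) {y : ℝ} (hy : 0 ≤ y) :
    ((0:ℝ), (fun _ => 0 : Fin K → ℝ)) ∈ M.feas y :=
  ⟨⟨le_refl 0, le_min M.vbar_pos.le hy⟩, fun i => ⟨le_refl 0, (M.dbar_pos i).le⟩⟩

lemma feas_nonempty (M : EVModel K T Ω) {y : ℝ} (hy : 0 ≤ y) : (M.feas y).Nonempty :=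
  ⟨_, M.feas_zero_mem hy⟩

lemma feas_comb (M : EVModel K T Ω) {y1 y2 a b : ℝ}
    (hy1 : 0 ≤ y1) (hy2 : 0 ≤ y2) (ha : 0 ≤ a) (hb : 0 ≤ b) (hab : a + b = 1)
    {p1 p2 : ℝ × (Fin K → ℝ)} (hp1 : p1 ∈ M.feas y1) (hp2 : p2 ∈ M.feas y2) :
    (a * p1.1 + b * p2.1, fun i => a * p1.2 i + b * p2.2 i) ∈ M.feas (a * y1 + b * y2) := by
  obtain ⟨⟨hv10, hv1⟩, hd1⟩ := hp1
  obtain ⟨⟨hv20, hv2⟩, hd2⟩ := hp2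
  have hv1b : p1.1 ≤ M.vbar := hv1.trans (min_le_left _ _)
  have hv1y : p1.1 ≤ y1 := hv1.trans (min_le_right _ _)
  have hv2b : p2.1 ≤ M.vbar := hv2.trans (min_le_left _ _)
  have hv2y : p2.1 ≤ y2 := hv2.trans (min_le_right _ _)
  refine ⟨⟨add_nonneg (mul_nonneg ha hv10) (mul_nonneg hb hv20), le_min ?_ ?_⟩, fun i => ?_⟩
  · show a * p1.1 + b * p2.1 ≤ M.vbar
    nlinarith [mul_le_mul_of_nonneg_left hv1b ha, mul_le_mul_of_nonneg_left hv2b hb]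
  · show a * p1.1 + b * p2.1 ≤ a * y1 + b * y2
    nlinarith [mul_le_mul_of_nonneg_left hv1y ha, mul_le_mul_of_nonneg_left hv2y hb]
  · obtain ⟨h10, h1t⟩ := hd1 i
    obtain ⟨h20, h2t⟩ := hd2 i
    refine ⟨add_nonneg (mul_nonneg ha h10) (mul_nonneg hb h20), ?_⟩
    show a * p1.2 i + b * p2.2 i ≤ M.dbar i
    nlinarith [mul_le_mul_of_nonneg_left h1t ha, mul_le_mul_of_nonneg_left h2t hb]

lemma stage_le (M : EVModel K T Ω) {s : ℕ} (hs : s < T) {v : ℝ} (hv : 0 ≤ v)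
    {d : Fin K → ℝ} (hd : ∀ i, d i ∈ Icc 0 (M.dbar i)) (c : ℝ) :
    M.stage s c v d ≤ (∑ i, M.U i (M.dbar i)) + M.γ * |c| := by
  obtain ⟨h1, h2, h3⟩ := M.A1 s hs
  have hsum : ∑ i, M.U i (d i) ≤ ∑ i, M.U i (M.dbar i) :=
    Finset.sum_le_sum fun i _ => M.U_le_top i (hd i)
  have hds : 0 ≤ ∑ i, d i := Finset.sum_nonneg fun i _ => (hd i).1
  have hz : -(v + ∑ i, d i - c) ≤ |c| := by
    have := le_abs_self c; linarith
  have hnem := NEM_ge_pm h2 (v + ∑ i, d i - c)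
  have habs := abs_nonneg c
  have key : -(NEMPayment (M.pip s) (M.pim s) (v + ∑ i, d i - c)) ≤ M.γ * |c| := by
    nlinarith [mul_le_mul_of_nonneg_left hz h1.le,
      mul_nonneg (by linarith : (0:ℝ) ≤ M.γ - M.pim s) habs]
  unfold stage
  linarith

lemma stage_lip (M : EVModel K T Ω) {s : ℕ} (hs : s < T) (v : ℝ) (d : Fin K → ℝ)
    (c1 c2 : ℝ) : |M.stage s c1 v d - M.stage s c2 v d| ≤ M.γ * |c1 - c2| := by
  obtain ⟨h1, h2, h3⟩ := M.A1 s hs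
  have h := NEM_abs_sub h2 h1.le h3.le (h2.trans h3.le) (v + ∑ i, d i - c1) (v + ∑ i, d i - c2)
  have e : |(v + ∑ i, d i - c1) - (v + ∑ i, d i - c2)| = |c1 - c2| := by
    rw [show (v + ∑ i, d i - c1) - (v + ∑ i, d i - c2) = -(c1 - c2) by ring, abs_neg]
  rw [e] at h
  unfold stage
  rw [show (∑ i, M.U i (d i) - NEMPayment (M.pip s) (M.pim s) (v + ∑ i, d i - c1)) -
      (∑ i, M.U i (d i) - NEMPayment (M.pip s) (M.pim s) (v + ∑ i, d i - c2)) =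
      -(NEMPayment (M.pip s) (M.pim s) (v + ∑ i, d i - c1) -
        NEMPayment (M.pip s) (M.pim s) (v + ∑ i, d i - c2)) by ring, abs_neg]
  exact h

lemma stage_comb (M : EVModel K T Ω) {s : ℕ} (hs : s < T) (c : ℝ) {a b : ℝ}
    (ha : 0 ≤ a) (hb : 0 ≤ b) (hab : a + b = 1) {v1 v2 : ℝ} {d1 d2 : Fin K → ℝ}
    (hd1 : ∀ i, d1 i ∈ Icc 0 (M.dbar i)) (hd2 : ∀ i, d2 i ∈ Icc 0 (M.dbar i)) :
    a * M.stage s c v1 d1 + b * M.stage s c v2 d2 ≤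
      M.stage s c (a * v1 + b * v2) (fun i => a * d1 i + b * d2 i) := by
  obtain ⟨h1, h2, h3⟩ := M.A1 s hs
  have hU : ∀ i ∈ Finset.univ, a * M.U i (d1 i) + b * M.U i (d2 i) ≤
      M.U i (a * d1 i + b * d2 i) := fun i _ => by
    simpa using (M.U_strictConcave i).concaveOn.2 (hd1 i) (hd2 i) ha hb hab
  have hUsum : a * ∑ i, M.U i (d1 i) + b * ∑ i, M.U i (d2 i) ≤
      ∑ i, M.U i (a * d1 i + b * d2 i) :=
    calc a * ∑ i, M.U i (d1 i) + b * ∑ i, M.U i (d2 i)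
        = ∑ i, (a * M.U i (d1 i) + b * M.U i (d2 i)) := by
          rw [Finset.sum_add_distrib, Finset.mul_sum, Finset.mul_sum]
      _ ≤ _ := Finset.sum_le_sum hU
  have hsum_d : ∑ i, (a * d1 i + b * d2 i) = a * ∑ i, d1 i + b * ∑ i, d2 i := by
    rw [Finset.sum_add_distrib, Finset.mul_sum, Finset.mul_sum]
  have hzbar : (a * v1 + b * v2) + ∑ i, (a * d1 i + b * d2 i) - c =
      a * (v1 + ∑ i, d1 i - c) + b * (v2 + ∑ i, d2 i - c) := by
    rw [hsum_d]; linear_combination c * hab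
  have hNEM := NEM_comb h2 (v1 + ∑ i, d1 i - c) (v2 + ∑ i, d2 i - c) ha hb
  unfold stage
  rw [hzbar]
  linarith

end EVModel

end ModelAux

namespace EVModel

variable {K T : ℕ} {Ω : Type} [MeasurableSpace Ω]

lemma layer (M : EVModel K T Ω) (hγ : 0 < M.γ)
    (g : ℝ → ℝ → (ℝ × (Fin K → ℝ)) → ℝ) (A : ℝ)
    (hG1 : ∀ y, 0 ≤ y → ∀ c, ∀ p ∈ M.feas y, g y c p ≤ A + M.γ * |c|)
    (hG2 : ∀ y, 0 ≤ y → ∀ c, 0 ≤ c → -(M.γ * y) ≤ g y c ((0:ℝ), fun _ => 0))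
    (hG3 : ∀ y, 0 ≤ y → ∀ c1 c2, ∀ p ∈ M.feas y, |g y c1 p - g y c2 p| ≤ M.γ * |c1 - c2|)
    (hG4 : ∀ (c y1 y2 a b : ℝ), 0 ≤ y1 → 0 ≤ y2 → 0 ≤ a → 0 ≤ b → a + b = 1 →
      ∀ p1 ∈ M.feas y1, ∀ p2 ∈ M.feas y2,
        a * g y1 c p1 + b * g y2 c p2 ≤
          g (a * y1 + b * y2) c
            (a * p1.1 + b * p2.1, fun i => a * p1.2 i + b * p2.2 i)) :
    (∀ y : ℝ, 0 ≤ y →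
      (∀ c : ℝ, sSup ((g y c) '' M.feas y) ≤ A + M.γ * |c|) ∧
      (∀ c : ℝ, 0 ≤ c → -(M.γ * y) ≤ sSup ((g y c) '' M.feas y)) ∧
      (∀ c1 c2 : ℝ, |sSup ((g y c1) '' M.feas y) - sSup ((g y c2) '' M.feas y)| ≤
        M.γ * |c1 - c2|)) ∧
    (∀ c : ℝ, CombConc (fun y => sSup ((g y c) '' M.feas y))) := by
  have hbdd : ∀ y, 0 ≤ y → ∀ c, BddAbove ((g y c) '' M.feas y) := by
    intro y hy c
    exact ⟨A + M.γ * |c|, by rintro _ ⟨p, hp, rfl⟩; exact hG1 y hy c p hp⟩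
  have hne : ∀ y, 0 ≤ y → ∀ c : ℝ, ((g y c) '' M.feas y).Nonempty :=
    fun y hy c => ⟨_, ⟨_, M.feas_zero_mem hy, rfl⟩⟩
  constructor
  · intro y hy
    refine ⟨fun c => ?_, fun c hc => ?_, fun c1 c2 => ?_⟩
    · exact csSup_le (hne y hy c) (by rintro _ ⟨p, hp, rfl⟩; exact hG1 y hy c p hp)
    · exact le_trans (hG2 y hy c hc)
        (le_csSup (hbdd y hy c) ⟨_, M.feas_zero_mem hy, rfl⟩)
    · exact abs_csSup_sub_csSup_le (M.feas_nonempty hy) (hbdd y hy c1) (hbdd y hy c2)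
        (hG3 y hy c1 c2)
  · intro c y1 y2 a b hy1 hy2 ha hb hab
    have hyc : 0 ≤ a * y1 + b * y2 := add_nonneg (mul_nonneg ha hy1) (mul_nonneg hb hy2)
    have key : ∀ p1 ∈ M.feas y1, ∀ p2 ∈ M.feas y2,
        a * g y1 c p1 + b * g y2 c p2 ≤ sSup ((g (a * y1 + b * y2) c) '' M.feas (a * y1 + b * y2)) :=
      fun p1 hp1 p2 hp2 => le_trans (hG4 c y1 y2 a b hy1 hy2 ha hb hab p1 hp1 p2 hp2)
        (le_csSup (hbdd _ hyc c) ⟨_, M.feas_comb hy1 hy2 ha hb hab hp1 hp2, rfl⟩)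
    have h1 : a * sSup ((g y1 c) '' M.feas y1) ≤
        sSup ((g (a * y1 + b * y2) c) '' M.feas (a * y1 + b * y2)) -
          b * sSup ((g y2 c) '' M.feas y2) := by
      apply mul_csSup_le (hne y1 hy1 c) ha
      rintro _ ⟨p1, hp1, rfl⟩
      have h2 : b * sSup ((g y2 c) '' M.feas y2) ≤
          sSup ((g (a * y1 + b * y2) c) '' M.feas (a * y1 + b * y2)) - a * g y1 c p1 := by
        apply mul_csSup_le (hne y2 hy2 c) hb
        rintro _ ⟨p2, hp2, rfl⟩
        linarith [key p1 hp1 p2 hp2]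
      linarith
    linarith

lemma integrable_comp (M : EVModel K T Ω) (hγ : 0 < M.γ) {k : ℕ} {A : ℝ}
    (hA : ∀ y : ℝ, 0 ≤ y →
      (∀ c : ℝ, M.W k y c ≤ A + M.γ * |c|) ∧
      (∀ c : ℝ, 0 ≤ c → -(M.γ * y) ≤ M.W k y c) ∧
      (∀ c1 c2 : ℝ, |M.W k y c1 - M.W k y c2| ≤ M.γ * |c1 - c2|))
    (s : ℕ) {y : ℝ} (hy : 0 ≤ y) :
    MeasureTheory.Integrable (fun ω => M.W k y (M.r s ω)) M.μ := by
  haveI := M.prob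
  obtain ⟨h1, h2, h3⟩ := hA y hy
  have hlip : LipschitzWith (Real.toNNReal M.γ) (fun c => M.W k y c) := by
    apply LipschitzWith.of_dist_le_mul
    intro c1 c2
    rw [Real.dist_eq, Real.dist_eq]
    calc |M.W k y c1 - M.W k y c2| ≤ M.γ * |c1 - c2| := h3 c1 c2
      _ = (Real.toNNReal M.γ : ℝ) * |c1 - c2| := by rw [Real.coe_toNNReal _ hγ.le]
  refine MeasureTheory.Integrable.mono'
    ((MeasureTheory.integrable_const (|A| + M.γ * y)).add ((M.r_int s).const_mul M.γ))
    ((hlip.continuous.measurable.comp (M.r_meas s)).aestronglyMeasurable) ?_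
  filter_upwards with ω
  have hc := M.r_nonneg s ω
  have hu := h1 (M.r s ω)
  rw [abs_of_nonneg hc] at hu
  have hl := h2 (M.r s ω) hc
  rw [Real.norm_eq_abs, abs_le]
  constructor
  · have := abs_nonneg A
    have := mul_nonneg hγ.le hc
    simp only [Pi.add_apply]
    linarith
  · have := le_abs_self A
    have := mul_nonneg hγ.le hy
    simp only [Pi.add_apply]
    linarith

lemma integral_W_bounds (M : EVModel K T Ω) (hγ : 0 < M.γ) {k : ℕ} {A : ℝ}
    (hA : ∀ y : ℝ, 0 ≤ y →
      (∀ c : ℝ, M.W k y c ≤ A + M.γ * |c|) ∧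
      (∀ c : ℝ, 0 ≤ c → -(M.γ * y) ≤ M.W k y c) ∧
      (∀ c1 c2 : ℝ, |M.W k y c1 - M.W k y c2| ≤ M.γ * |c1 - c2|))
    (s : ℕ) {y : ℝ} (hy : 0 ≤ y) :
    -(M.γ * y) ≤ (∫ ω, M.W k y (M.r s ω) ∂M.μ) ∧
      (∫ ω, M.W k y (M.r s ω) ∂M.μ) ≤ A + M.γ * ∫ ω, M.r s ω ∂M.μ := by
  haveI := M.prob
  have hint := M.integrable_comp hγ hA s hy
  constructor
  · have h := MeasureTheory.integral_mono (MeasureTheory.integrable_const (-(M.γ * y))) hint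
      (fun ω => (hA y hy).2.1 (M.r s ω) (M.r_nonneg s ω))
    simpa using h
  · have h := MeasureTheory.integral_mono (f := fun ω => M.W k y (M.r s ω))
      (g := fun ω => A + M.γ * M.r s ω) hint
      ((MeasureTheory.integrable_const A).add ((M.r_int s).const_mul M.γ))
      (fun ω => by
        have := (hA y hy).1 (M.r s ω)
        rwa [abs_of_nonneg (M.r_nonneg s ω)] at this)
    rwa [MeasureTheory.integral_add (MeasureTheory.integrable_const A)
      ((M.r_int s).const_mul M.γ), MeasureTheory.integral_const,
      MeasureTheory.integral_const_mul, probReal_univ,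
      one_smul] at h

end EVModel

namespace EVModel

variable {K T : ℕ} {Ω : Type} [MeasurableSpace Ω]

lemma master (M : EVModel K T Ω) (hT : 0 < T) (k : ℕ) :
    (∃ A : ℝ, ∀ y : ℝ, 0 ≤ y →
      (∀ c : ℝ, M.W k y c ≤ A + M.γ * |c|) ∧
      (∀ c : ℝ, 0 ≤ c → -(M.γ * y) ≤ M.W k y c) ∧
      (∀ c1 c2 : ℝ, |M.W k y c1 - M.W k y c2| ≤ M.γ * |c1 - c2|)) ∧
    (∀ c : ℝ, CombConc (fun y => M.W k y c)) := by
  have hγ := M.gamma_pos hT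
  induction k with
  | zero =>
    have hA1 := M.A1 (T - 1) (by omega)
    obtain ⟨h1, h2, h3⟩ := hA1
    have hG1 : ∀ y : ℝ, 0 ≤ y → ∀ c : ℝ, ∀ p ∈ M.feas y,
        M.stage (T - 1) c p.1 p.2 - M.γ * (y - p.1) ≤
          (∑ i, M.U i (M.dbar i)) + M.γ * |c| := by
      intro y hy c p hp
      obtain ⟨⟨hv0, hvm⟩, hd⟩ := hp
      have hvy : p.1 ≤ y := hvm.trans (min_le_right _ _)
      have h := M.stage_le (by omega : T - 1 < T) hv0 hd c
      have h0 : 0 ≤ M.γ * (y - p.1) := mul_nonneg hγ.le (by linarith)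
      linarith
    have hG2 : ∀ y : ℝ, 0 ≤ y → ∀ c : ℝ, 0 ≤ c →
        -(M.γ * y) ≤ M.stage (T - 1) c 0 (fun _ => 0) - M.γ * (y - 0) := by
      intro y hy c hc
      have hnem : NEMPayment (M.pip (T - 1)) (M.pim (T - 1))
          (0 + (∑ i : Fin K, (fun _ : Fin K => (0:ℝ)) i) - c) ≤ 0 := by
        rw [NEM_eq_max h2]
        apply max_le <;> · simp; nlinarith
      have hU0 : (∑ i : Fin K, M.U i ((fun _ : Fin K => (0:ℝ)) i)) = 0 := by
        simp [M.U_zero]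
      unfold stage
      rw [hU0]
      linarith
    have hG3 : ∀ y : ℝ, 0 ≤ y → ∀ c1 c2 : ℝ, ∀ p ∈ M.feas y,
        |(M.stage (T - 1) c1 p.1 p.2 - M.γ * (y - p.1)) -
          (M.stage (T - 1) c2 p.1 p.2 - M.γ * (y - p.1))| ≤ M.γ * |c1 - c2| := by
      intro y hy c1 c2 p hp
      rw [show (M.stage (T - 1) c1 p.1 p.2 - M.γ * (y - p.1)) -
          (M.stage (T - 1) c2 p.1 p.2 - M.γ * (y - p.1)) =
          M.stage (T - 1) c1 p.1 p.2 - M.stage (T - 1) c2 p.1 p.2 by ring]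
      exact M.stage_lip (by omega) p.1 p.2 c1 c2
    have hG4 : ∀ (c y1 y2 a b : ℝ), 0 ≤ y1 → 0 ≤ y2 → 0 ≤ a → 0 ≤ b → a + b = 1 →
        ∀ p1 ∈ M.feas y1, ∀ p2 ∈ M.feas y2,
          a * (M.stage (T - 1) c p1.1 p1.2 - M.γ * (y1 - p1.1)) +
            b * (M.stage (T - 1) c p2.1 p2.2 - M.γ * (y2 - p2.1)) ≤
          M.stage (T - 1) c (a * p1.1 + b * p2.1) (fun i => a * p1.2 i + b * p2.2 i) -
            M.γ * ((a * y1 + b * y2) - (a * p1.1 + b * p2.1)) := by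
      intro c y1 y2 a b hy1 hy2 ha hb hab p1 hp1 p2 hp2
      have hs := M.stage_comb (by omega : T - 1 < T) c ha hb hab
        (fun i => hp1.2 i) (fun i => hp2.2 i) (v1 := p1.1) (v2 := p2.1)
      have e : M.γ * ((a * y1 + b * y2) - (a * p1.1 + b * p2.1)) =
          a * (M.γ * (y1 - p1.1)) + b * (M.γ * (y2 - p2.1)) := by ring
      linarith
    have hL := M.layer hγ (fun y c p => M.stage (T - 1) c p.1 p.2 - M.γ * (y - p.1))
      (∑ i, M.U i (M.dbar i)) hG1 hG2 hG3 hG4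
    exact ⟨⟨_, hL.1⟩, hL.2⟩
  | succ k ih =>
    obtain ⟨⟨A, hA⟩, hconc⟩ := ih
    have hs2 : T - 2 - k < T := by omega
    obtain ⟨h1, h2, h3⟩ := M.A1 (T - 2 - k) hs2
    set R := ∫ ω, M.r (T - 1 - k) ω ∂M.μ with hR
    have hG1 : ∀ y : ℝ, 0 ≤ y → ∀ c : ℝ, ∀ p ∈ M.feas y,
        M.stage (T - 2 - k) c p.1 p.2 +
          (∫ ω, M.W k (y - p.1) (M.r (T - 1 - k) ω) ∂M.μ) ≤
          ((∑ i, M.U i (M.dbar i)) + (A + M.γ * R)) + M.γ * |c| := by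
      intro y hy c p hp
      obtain ⟨⟨hv0, hvm⟩, hd⟩ := hp
      have hvy : p.1 ≤ y := hvm.trans (min_le_right _ _)
      have h := M.stage_le hs2 hv0 hd c
      have hI := (M.integral_W_bounds hγ hA (T - 1 - k) (by linarith : 0 ≤ y - p.1)).2
      rw [← hR] at hI
      linarith
    have hG2 : ∀ y : ℝ, 0 ≤ y → ∀ c : ℝ, 0 ≤ c →
        -(M.γ * y) ≤ M.stage (T - 2 - k) c 0 (fun _ => 0) +
          (∫ ω, M.W k (y - 0) (M.r (T - 1 - k) ω) ∂M.μ) := by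
      intro y hy c hc
      have hnem : NEMPayment (M.pip (T - 2 - k)) (M.pim (T - 2 - k))
          (0 + (∑ i : Fin K, (fun _ : Fin K => (0:ℝ)) i) - c) ≤ 0 := by
        rw [NEM_eq_max h2]
        apply max_le <;> · simp; nlinarith
      have hU0 : (∑ i : Fin K, M.U i ((fun _ : Fin K => (0:ℝ)) i)) = 0 := by
        simp [M.U_zero]
      have hI := (M.integral_W_bounds hγ hA (T - 1 - k) (by linarith : 0 ≤ y - 0)).1
      have hIy : -(M.γ * y) ≤ ∫ ω, M.W k (y - 0) (M.r (T - 1 - k) ω) ∂M.μ := by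
        rw [show M.γ * y = M.γ * (y - 0) by ring]
        exact hI
      unfold stage
      rw [hU0]
      linarith
    have hG3 : ∀ y : ℝ, 0 ≤ y → ∀ c1 c2 : ℝ, ∀ p ∈ M.feas y,
        |(M.stage (T - 2 - k) c1 p.1 p.2 +
            (∫ ω, M.W k (y - p.1) (M.r (T - 1 - k) ω) ∂M.μ)) -
          (M.stage (T - 2 - k) c2 p.1 p.2 +
            (∫ ω, M.W k (y - p.1) (M.r (T - 1 - k) ω) ∂M.μ))| ≤ M.γ * |c1 - c2| := by
      intro y hy c1 c2 p hp
      rw [show (M.stage (T - 2 - k) c1 p.1 p.2 +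
            (∫ ω, M.W k (y - p.1) (M.r (T - 1 - k) ω) ∂M.μ)) -
          (M.stage (T - 2 - k) c2 p.1 p.2 +
            (∫ ω, M.W k (y - p.1) (M.r (T - 1 - k) ω) ∂M.μ)) =
          M.stage (T - 2 - k) c1 p.1 p.2 - M.stage (T - 2 - k) c2 p.1 p.2 by ring]
      exact M.stage_lip hs2 p.1 p.2 c1 c2
    have hG4 : ∀ (c y1 y2 a b : ℝ), 0 ≤ y1 → 0 ≤ y2 → 0 ≤ a → 0 ≤ b → a + b = 1 →
        ∀ p1 ∈ M.feas y1, ∀ p2 ∈ M.feas y2,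
          a * (M.stage (T - 2 - k) c p1.1 p1.2 +
              (∫ ω, M.W k (y1 - p1.1) (M.r (T - 1 - k) ω) ∂M.μ)) +
            b * (M.stage (T - 2 - k) c p2.1 p2.2 +
              (∫ ω, M.W k (y2 - p2.1) (M.r (T - 1 - k) ω) ∂M.μ)) ≤
          M.stage (T - 2 - k) c (a * p1.1 + b * p2.1)
              (fun i => a * p1.2 i + b * p2.2 i) +
            (∫ ω, M.W k ((a * y1 + b * y2) - (a * p1.1 + b * p2.1))
              (M.r (T - 1 - k) ω) ∂M.μ) := by
      intro c y1 y2 a b hy1 hy2 ha hb hab p1 hp1 p2 hp2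
      have hu1 : (0:ℝ) ≤ y1 - p1.1 := by
        have := hp1.1.2.trans (min_le_right _ _); linarith
      have hu2 : (0:ℝ) ≤ y2 - p2.1 := by
        have := hp2.1.2.trans (min_le_right _ _); linarith
      have hs := M.stage_comb hs2 c ha hb hab (fun i => hp1.2 i) (fun i => hp2.2 i)
        (v1 := p1.1) (v2 := p2.1)
      have hint1 := M.integrable_comp hγ hA (T - 1 - k) hu1
      have hint2 := M.integrable_comp hγ hA (T - 1 - k) hu2
      have hintc := M.integrable_comp hγ hA (T - 1 - k)
        (by positivity : (0:ℝ) ≤ a * (y1 - p1.1) + b * (y2 - p2.1))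
      have hpt : ∀ ω, a * M.W k (y1 - p1.1) (M.r (T - 1 - k) ω) +
          b * M.W k (y2 - p2.1) (M.r (T - 1 - k) ω) ≤
          M.W k (a * (y1 - p1.1) + b * (y2 - p2.1)) (M.r (T - 1 - k) ω) :=
        fun ω => hconc (M.r (T - 1 - k) ω) _ _ a b hu1 hu2 ha hb hab
      have hI : a * (∫ ω, M.W k (y1 - p1.1) (M.r (T - 1 - k) ω) ∂M.μ) +
          b * (∫ ω, M.W k (y2 - p2.1) (M.r (T - 1 - k) ω) ∂M.μ) ≤
          ∫ ω, M.W k ((a * y1 + b * y2) - (a * p1.1 + b * p2.1))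
            (M.r (T - 1 - k) ω) ∂M.μ := by
        rw [show (a * y1 + b * y2) - (a * p1.1 + b * p2.1) =
          a * (y1 - p1.1) + b * (y2 - p2.1) by ring]
        rw [← MeasureTheory.integral_const_mul, ← MeasureTheory.integral_const_mul,
          ← MeasureTheory.integral_add (hint1.const_mul a) (hint2.const_mul b)]
        exact MeasureTheory.integral_mono
          (f := fun ω => a * M.W k (y1 - p1.1) (M.r (T - 1 - k) ω) +
            b * M.W k (y2 - p2.1) (M.r (T - 1 - k) ω))
          (g := fun ω => M.W k (a * (y1 - p1.1) + b * (y2 - p2.1)) (M.r (T - 1 - k) ω))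
          ((hint1.const_mul a).add (hint2.const_mul b)) hintc hpt
      linarith
    have hL := M.layer hγ
      (fun y c p => M.stage (T - 2 - k) c p.1 p.2 +
        ∫ ω, M.W k (y - p.1) (M.r (T - 1 - k) ω) ∂M.μ)
      ((∑ i, M.U i (M.dbar i)) + (A + M.γ * R)) hG1 hG2 hG3 hG4
    exact ⟨⟨_, hL.1⟩, hL.2⟩

end EVModel

namespace EVModel

variable {K T : ℕ} {Ω : Type} [MeasurableSpace Ω]

lemma Vbar_comb (M : EVModel K T Ω) (hT : 0 < T) (t' : ℕ) : CombConc (M.Vbar t') := by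
  obtain ⟨⟨A, hA⟩, hconc⟩ := M.master hT (T - 1 - t')
  have hγ := M.gamma_pos hT
  intro y1 y2 a b hy1 hy2 ha hb hab
  have hyc : (0:ℝ) ≤ a * y1 + b * y2 := add_nonneg (mul_nonneg ha hy1) (mul_nonneg hb hy2)
  have hint1 := M.integrable_comp hγ hA t' hy1
  have hint2 := M.integrable_comp hγ hA t' hy2
  have hintc := M.integrable_comp hγ hA t' hyc
  have e : ∀ y : ℝ, M.Vbar t' y = ∫ ω, M.W (T - 1 - t') y (M.r t' ω) ∂M.μ := fun y => rfl
  rw [e, e, e]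
  rw [← MeasureTheory.integral_const_mul, ← MeasureTheory.integral_const_mul,
    ← MeasureTheory.integral_add (hint1.const_mul a) (hint2.const_mul b)]
  exact MeasureTheory.integral_mono
    (f := fun ω => a * M.W (T - 1 - t') y1 (M.r t' ω) + b * M.W (T - 1 - t') y2 (M.r t' ω))
    (g := fun ω => M.W (T - 1 - t') (a * y1 + b * y2) (M.r t' ω))
    ((hint1.const_mul a).add (hint2.const_mul b)) hintc
    (fun ω => hconc (M.r t' ω) y1 y2 a b hy1 hy2 ha hb hab)

end EVModel

/-- **Theorem 1, net consumption zone.**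
Let `τ_t ∈ [0, (T - t - 1) v̄]` satisfy `-π_t⁺ ∈ h_{t+1}(τ_t)`.  Then
`d*_i = l_i(π_t⁺)` together with `v* = min {v̄, max {y_t - τ_t, 0}}` is optimal for the
Bellman equation at time `t` whenever `v* + ∑ i d*_i > r_t`; equivalently `(v*, d*)`
solves the convex program `P⁺` (maximize over `v + ∑ d ≥ r_t`) with the
net-consumption constraint inactive. -/
theorem thm1_net_consumption_zone (K T : ℕ) (Ω : Type) [MeasurableSpace Ω]
    (M : EVModel K T Ω)
    -- `L i` is the marginal utility `U_i'` on `[0, d̄_i]`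
    (L : Fin K → ℝ → ℝ)
    (hL : ∀ i, ∀ x ∈ Set.Icc 0 (M.dbar i),
      HasDerivWithinAt (M.U i) (L i x) (Set.Icc 0 (M.dbar i)) x)
    (hLcont : ∀ i, ContinuousOn (L i) (Set.Icc 0 (M.dbar i)))
    -- `l i π = max {0, min {d̄_i, L_i⁻¹(π)}}`, characterized by clipping
    (l : Fin K → ℝ → ℝ)
    (hl_mem : ∀ i π, l i π ∈ Set.Icc 0 (M.dbar i))
    (hl_hi : ∀ i π, π ≤ L i (M.dbar i) → l i π = M.dbar i)
    (hl_lo : ∀ i π, L i 0 ≤ π → l i π = 0)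
    (hl_mid : ∀ i π, L i (M.dbar i) < π → π < L i 0 → L i (l i π) = π)
    (t : ℕ) (ht : t < T - 1) (y : ℝ) (hy : 0 ≤ y) (rt : ℝ) (hrt : 0 ≤ rt)
    (τ : ℝ) (hτ : τ ∈ Set.Icc 0 (((T - t - 1 : ℕ) : ℝ) * M.vbar))
    (hτh : -M.pip t ∈ M.h (t + 1) τ)
    -- the net-consumption zone condition: `v* + ∑ i d*_i > r_t`
    (hzone : rt < min M.vbar (max (y - τ) 0) + ∑ i, l i (M.pip t)) :
    M.IsBellmanOpt t y rt (min M.vbar (max (y - τ) 0), fun i => l i (M.pip t)) ∧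
      IsMaxOn
        (fun p : ℝ × (Fin K → ℝ) =>
          ∑ i, M.U i (p.2 i) - M.pip t * (p.1 + ∑ i, p.2 i - rt) + M.Vbar (t + 1) (y - p.1))
        {p | p ∈ M.feas y ∧ rt ≤ p.1 + ∑ i, p.2 i}
        (min M.vbar (max (y - τ) 0), fun i => l i (M.pip t)) := by
  obtain ⟨hτ0, hτub⟩ := hτ
  have hT0 : 0 < T := by omega
  have htT : t < T := by omega
  have htne : t ≠ T - 1 := by omega
  obtain ⟨hpm, hpmp, hppγ⟩ := M.A1 t htT
  have hγ := M.gamma_pos hT0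
  -- the optimal decisions
  have hvst0 : (0:ℝ) ≤ min M.vbar (max (y - τ) 0) := le_min M.vbar_pos.le (le_max_right _ _)
  have hvsty : min M.vbar (max (y - τ) 0) ≤ y :=
    (min_le_right _ _).trans (max_le (by linarith) hy)
  have hfeas : ((min M.vbar (max (y - τ) 0), fun i => l i (M.pip t)) : ℝ × (Fin K → ℝ)) ∈
      M.feas y :=
    ⟨⟨hvst0, le_min (min_le_left _ _) hvsty⟩, fun i => hl_mem i (M.pip t)⟩
  -- optimality of each dᵢ*
  have hdopt : ∀ i, ∀ x ∈ Set.Icc 0 (M.dbar i),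
      M.U i x - M.pip t * x ≤
        M.U i (l i (M.pip t)) - M.pip t * (l i (M.pip t)) := by
    intro i x hx
    have hconc := (M.U_strictConcave i).concaveOn
    have htop : M.dbar i ∈ Set.Icc 0 (M.dbar i) := ⟨(M.dbar_pos i).le, le_refl _⟩
    have hbot : (0:ℝ) ∈ Set.Icc 0 (M.dbar i) := ⟨le_refl _, (M.dbar_pos i).le⟩
    rcases le_or_gt (M.pip t) (L i (M.dbar i)) with hcase | hcase
    · rw [hl_hi i (M.pip t) hcase]
      have htan := tangent_of_concaveOn hconc htop (hL i _ htop) hx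
      have hxd : x - M.dbar i ≤ 0 := by linarith [hx.2]
      have := mul_le_mul_of_nonpos_right hcase hxd
      linarith
    · rcases le_or_gt (L i 0) (M.pip t) with hcase2 | hcase2
      · rw [hl_lo i (M.pip t) hcase2]
        have htan := tangent_of_concaveOn hconc hbot (hL i _ hbot) hx
        have := mul_le_mul_of_nonneg_right hcase2 hx.1
        rw [M.U_zero i] at htan ⊢
        simp only [mul_zero, sub_zero]
        linarith
      · have hmid := hl_mid i (M.pip t) hcase hcase2
        have hmem := hl_mem i (M.pip t)
        have htan := tangent_of_concaveOn hconc hmem (hL i _ hmem) hx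
        rw [hmid] at htan
        linarith
  -- optimality of v*
  have hcomb : CombConc (M.Vbar (t + 1)) := M.Vbar_comb hT0 (t + 1)
  have hsd : ∀ z, 0 ≤ z →
      M.Vbar (t + 1) z ≤ M.Vbar (t + 1) τ + (-M.pip t) * (z - τ) := fun z hz => hτh z hz
  have hvopt := vopt hcomb hτ0 hsd M.vbar_pos hy
  -- master inequality for the relaxed objective
  have key : ∀ q ∈ M.feas y,
      (∑ i, M.U i (q.2 i) - M.pip t * (q.1 + ∑ i, q.2 i - rt) + M.Vbar (t + 1) (y - q.1)) ≤
      (∑ i, M.U i (l i (M.pip t)) -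
        M.pip t * (min M.vbar (max (y - τ) 0) + ∑ i, l i (M.pip t) - rt) +
        M.Vbar (t + 1) (y - min M.vbar (max (y - τ) 0))) := by
    intro q hq
    have hd : ∑ i, (M.U i (q.2 i) - M.pip t * q.2 i) ≤
        ∑ i, (M.U i (l i (M.pip t)) - M.pip t * (l i (M.pip t))) :=
      Finset.sum_le_sum fun i _ => hdopt i _ (hq.2 i)
    rw [Finset.sum_sub_distrib, Finset.sum_sub_distrib, ← Finset.mul_sum,
      ← Finset.mul_sum] at hd
    have hv := hvopt q.1 hq.1.1 hq.1.2
    linarith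
  refine ⟨⟨hfeas, ?_⟩, ?_⟩
  · intro q hq
    have hB : ∀ p : ℝ × (Fin K → ℝ), M.bellObj t y rt p =
        M.stage t rt p.1 p.2 + M.Vbar (t + 1) (y - p.1) := by
      intro p
      simp only [EVModel.bellObj, if_neg htne]
      rfl
    rw [hB, hB]
    have hstq : M.stage t rt q.1 q.2 ≤
        ∑ i, M.U i (q.2 i) - M.pip t * (q.1 + ∑ i, q.2 i - rt) := by
      unfold EVModel.stage
      have := NEM_ge_pp hpmp (q.1 + ∑ i, q.2 i - rt)
      linarith
    have hstp : M.stage t rt (min M.vbar (max (y - τ) 0)) (fun i => l i (M.pip t)) =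
        ∑ i, M.U i (l i (M.pip t)) -
          M.pip t * (min M.vbar (max (y - τ) 0) + ∑ i, l i (M.pip t) - rt) := by
      unfold EVModel.stage
      rw [NEM_of_nonneg hpmp
        (by linarith : (0:ℝ) ≤ min M.vbar (max (y - τ) 0) + ∑ i, l i (M.pip t) - rt)]
    have hk := key q hq
    rw [hstp]
    linarith
  · rw [isMaxOn_iff]
    rintro q ⟨hq, _⟩
    exact key q hq
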